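/- Let Φ be a root system with simple roots Δ and minimal building set F_Φ (irreducible subspaces). If B is spanned by a subset of Δ and its F_Φ-decomposition is B = A₁ ⊕ ... ⊕ A_k, then the subspaces A₁,...,A_k are pairwise orthogonal. -/

import Mathlib

open Finset Submodule

open scoped Classical

local notation "⟪" x ", " y "⟫" => @inner ℝ _ _ x y

/-- `U` is a `Φ`-irreducible subspace: it is spanned by the root subsystem `Φ ∩ U`,
this subsystem is nonempty, and it admits no splitting into two nonempty mutually
orthogonal parts.  The minimal building set `F_Φ` consists of these subspaces. -/
def IrrSub {V : Type*} [NormedAddCommGroup V] [InnerProductSpace ℝ V]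
    (Φ : Finset V) (U : Submodule ℝ V) : Prop :=
  (Φ.filter (fun α => α ∈ U)).Nonempty ∧
  U = span ℝ (↑(Φ.filter (fun α => α ∈ U)) : Set V) ∧
  ¬ ∃ S T : Finset V, S ∪ T = Φ.filter (fun α => α ∈ U) ∧ S ∩ T = ∅ ∧
      S.Nonempty ∧ T.Nonempty ∧ ∀ a ∈ S, ∀ b ∈ T, ⟪a, b⟫ = 0

section Aux

variable {V : Type*} [NormedAddCommGroup V] [InnerProductSpace ℝ V]

lemma span_span_orth {X Y : Finset V} (h : ∀ a ∈ X, ∀ b ∈ Y, ⟪a, b⟫ = 0)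
    {x y : V} (hx : x ∈ span ℝ (X : Set V)) (hy : y ∈ span ℝ (Y : Set V)) :
    ⟪x, y⟫ = 0 := by
  have h1 : ∀ b ∈ Y, ⟪x, b⟫ = 0 := by
    intro b hb
    induction hx using Submodule.span_induction with
    | mem a ha => exact h a ha b hb
    | zero => simp
    | add u v _ _ hu hv => rw [inner_add_left, hu, hv]; ring
    | smul c u _ hu => rw [real_inner_smul_left, hu]; ring
  induction hy using Submodule.span_induction with
  | mem b hb => exact h1 b hb
  | zero => simp
  | add u v _ _ hu hv => rw [inner_add_right, hu, hv]; ring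
  | smul c u _ hu => rw [real_inner_smul_right, hu]; ring

lemma finset_connected (X : Finset V)
    (hns : ¬ ∃ S T : Finset V, S ∪ T = X ∧ S ∩ T = ∅ ∧ S.Nonempty ∧ T.Nonempty ∧
      ∀ a ∈ S, ∀ b ∈ T, ⟪a, b⟫ = 0)
    {a b : V} (ha : a ∈ X) (hb : b ∈ X) :
    Relation.ReflTransGen (fun u v => u ∈ X ∧ v ∈ X ∧ ⟪u, v⟫ ≠ 0) a b := by
  set r := fun u v => u ∈ X ∧ v ∈ X ∧ ⟪u, v⟫ ≠ 0 with hr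
  by_contra hcon
  refine hns ⟨X.filter (fun x => Relation.ReflTransGen r a x),
    X.filter (fun x => ¬ Relation.ReflTransGen r a x), ?_, ?_, ⟨a, ?_⟩, ⟨b, ?_⟩, ?_⟩
  · ext z; simp only [Finset.mem_union, Finset.mem_filter]; tauto
  · ext z; simp only [Finset.mem_inter, Finset.mem_filter, Finset.notMem_empty, iff_false]
    tauto
  · exact Finset.mem_filter.2 ⟨ha, Relation.ReflTransGen.refl⟩
  · exact Finset.mem_filter.2 ⟨hb, hcon⟩
  · intro s hs t ht
    simp only [Finset.mem_filter] at hs ht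
    by_contra hst
    exact ht.2 (hs.2.trans (Relation.ReflTransGen.single ⟨hs.1, ht.1, hst⟩))

end Aux

/-- Let `Φ` be a root system with simple system `Δ` and minimal building set `F_Φ`
(the `Φ`-irreducible subspaces).  If `B` is spanned by a subset `I` of `Δ` and
`B = A 1 ⊕ ... ⊕ A k` is its `F_Φ`-decomposition (the `A i` are the maximal elements
of `F_Φ` contained in `B`, they are independent and their sum is `B`), then the
subspaces `A 1, ..., A k` are pairwise orthogonal. -/
theorem stmt10 {V : Type*} [NormedAddCommGroup V] [InnerProductSpace ℝ V]
    [FiniteDimensional ℝ V]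
    (Φ pos Δ : Finset V)
    (hspan : Submodule.span ℝ (↑Φ : Set V) = ⊤)
    (h0 : (0 : V) ∉ Φ)
    (hneg : ∀ α ∈ Φ, -α ∈ Φ)
    (hrefl : ∀ α ∈ Φ, ∀ β ∈ Φ, β - (2 * ⟪β, α⟫ / ⟪α, α⟫) • α ∈ Φ)
    (hpos : pos ⊆ Φ)
    (hposneg : ∀ α ∈ Φ, (α ∈ pos ∧ -α ∉ pos) ∨ (α ∉ pos ∧ -α ∈ pos))
    (hΔpos : Δ ⊆ pos)
    (hΔindep : LinearIndependent ℝ ((↑) : (↑Δ : Set V) → V))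
    (hΔcomb : ∀ β ∈ pos, ∃ c : V → ℝ, (∀ α ∈ Δ, 0 ≤ c α) ∧ β = ∑ α ∈ Δ, c α • α)
    (I : Finset V) (hI : I ⊆ Δ)
    (B : Submodule ℝ V) (hB : B = span ℝ (↑I : Set V))
    (k : ℕ) (A : Fin k → Submodule ℝ V)
    (hAirr : ∀ i, IrrSub Φ (A i))
    (hAle : ∀ i, A i ≤ B)
    (hAmax : ∀ i, ∀ U : Submodule ℝ V, IrrSub Φ U → U ≤ B → A i ≤ U → A i = U)
    (hAindep : iSupIndep A)
    (hAsum : B = ⨆ i, A i) :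
    ∀ i j, i ≠ j → ∀ x ∈ A i, ∀ y ∈ A j, ⟪x, y⟫ = 0 := by
  classical
  -- The ambient root subsystem of `B` and its adjacency relation.
  set Ψ : Finset V := Φ.filter (fun v => v ∈ B) with hΨdef
  set r : V → V → Prop := fun u v => u ∈ Ψ ∧ v ∈ Ψ ∧ ⟪u, v⟫ ≠ 0 with hrdef
  -- Key: roots of distinct components are orthogonal.
  have key : ∀ i j, i ≠ j → ∀ α ∈ Φ.filter (fun v => v ∈ A i),
      ∀ β ∈ Φ.filter (fun v => v ∈ A j), ⟪α, β⟫ = 0 := by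
    intro i j hij α hαmem β hβmem
    by_contra hne
    have hα := Finset.mem_filter.1 hαmem
    have hβ := Finset.mem_filter.1 hβmem
    have hαΨ : α ∈ Ψ := Finset.mem_filter.2 ⟨hα.1, hAle i hα.2⟩
    have hβΨ : β ∈ Ψ := Finset.mem_filter.2 ⟨hβ.1, hAle j hβ.2⟩
    -- connectivity inside each irreducible component
    have hconn : ∀ m : Fin k, ∀ x ∈ Φ.filter (fun v => v ∈ A m),
        ∀ y ∈ Φ.filter (fun v => v ∈ A m), Relation.ReflTransGen r x y := by
      intro m x hx y hy
      have h1 := finset_connected (Φ.filter (fun v => v ∈ A m)) (hAirr m).2.2 hx hy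
      refine Relation.ReflTransGen.mono ?_ _ _ h1
      rintro u v ⟨hu, hv, huv⟩
      have hu' := Finset.mem_filter.1 hu
      have hv' := Finset.mem_filter.1 hv
      exact ⟨Finset.mem_filter.2 ⟨hu'.1, hAle m hu'.2⟩,
        Finset.mem_filter.2 ⟨hv'.1, hAle m hv'.2⟩, huv⟩
    -- the connected component of α inside Ψ
    set C : Finset V := Ψ.filter (fun x => Relation.ReflTransGen r α x) with hCdef
    have hCsub : ∀ x ∈ C, x ∈ B := by
      intro x hx
      exact (Finset.mem_filter.1 (Finset.mem_of_mem_filter x hx)).2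
    have hspanCB : span ℝ (C : Set V) ≤ B := by
      rw [Submodule.span_le]; intro x hx; exact hCsub x hx
    have hαC : α ∈ C := Finset.mem_filter.2 ⟨hαΨ, Relation.ReflTransGen.refl⟩
    -- roots lying in the span of C are exactly C
    have hUeq : Φ.filter (fun v => v ∈ span ℝ (C : Set V)) = C := by
      ext γ
      constructor
      · intro hγ
        obtain ⟨hγΦ, hγU⟩ := Finset.mem_filter.1 hγ
        have hγΨ : γ ∈ Ψ := Finset.mem_filter.2 ⟨hγΦ, hspanCB hγU⟩
        by_contra hγC
        have hall : ∀ c ∈ C, ⟪c, γ⟫ = 0 := by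
          intro c hc
          by_contra hcγ
          have hc' := Finset.mem_filter.1 hc
          exact hγC (Finset.mem_filter.2 ⟨hγΨ,
            hc'.2.trans (Relation.ReflTransGen.single ⟨hc'.1, hγΨ, hcγ⟩)⟩)
        have : ⟪γ, γ⟫ = 0 :=
          span_span_orth (Y := {γ}) (fun a ha b hb => by
            rw [Finset.mem_singleton] at hb; subst hb; exact hall a ha)
            hγU (Submodule.subset_span (by simp))
        exact h0 (by rwa [inner_self_eq_zero.1 this] at hγΦ)
      · intro hγ
        have hγ' := Finset.mem_filter.1 hγ
        exact Finset.mem_filter.2 ⟨(Finset.mem_filter.1 hγ'.1).1,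
          Submodule.subset_span hγ⟩
    -- span C is Φ-irreducible
    have hirr : IrrSub Φ (span ℝ (C : Set V)) := by
      refine ⟨⟨α, by rw [hUeq]; exact hαC⟩, by rw [hUeq], ?_⟩
      rw [hUeq]
      rintro ⟨S, T, hST, hSTd, ⟨s, hs⟩, ⟨t, ht⟩, horth⟩
      have hsC : s ∈ C := by rw [← hST] at *; exact Finset.mem_union_left _ hs
      have htC : t ∈ C := by rw [← hST] at *; exact Finset.mem_union_right _ ht
      have hsC' := Finset.mem_filter.1 hsC
      have htC' := Finset.mem_filter.1 htC
      -- path from s to t inside Ψ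
      have hrsymm : Symmetric r := by
        rintro u v ⟨h1, h2, h3⟩
        exact ⟨h2, h1, by rwa [real_inner_comm]⟩
      have hst : Relation.ReflTransGen r s t :=
        Relation.ReflTransGen.trans (Relation.ReflTransGen.mono (fun a b h => hrsymm h) _ _ (Relation.ReflTransGen.swap _ _ hsC'.2)) htC'.2
      -- along the path everything stays in S
      have hmain : ∀ x, Relation.ReflTransGen r s x →
          Relation.ReflTransGen r α x → x ∈ S := by
        intro x hx
        induction hx with
        | refl => intro _; exact hs
        | tail hp hstep ih =>
          rename_i u v
          intro hαv
          have hu : u ∈ S := ih (hsC'.2.trans hp)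
          have hvC : v ∈ C := Finset.mem_filter.2 ⟨hstep.2.1, hαv⟩
          rw [← hST] at hvC
          rcases Finset.mem_union.1 hvC with hvS | hvT
          · exact hvS
          · exact absurd (horth u hu v hvT) hstep.2.2
      have htS : t ∈ S := hmain t hst htC'.2
      have : t ∈ S ∩ T := Finset.mem_inter.2 ⟨htS, ht⟩
      rw [hSTd] at this
      exact absurd this (Finset.notMem_empty t)
    -- A i = span C
    have hXiC : ∀ x ∈ Φ.filter (fun v => v ∈ A i), x ∈ C := by
      intro x hx
      have hx' := Finset.mem_filter.1 hx
      exact Finset.mem_filter.2 ⟨Finset.mem_filter.2 ⟨hx'.1, hAle i hx'.2⟩,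
        hconn i α hαmem x hx⟩
    have hAiC : A i ≤ span ℝ (C : Set V) := by
      rw [(hAirr i).2.1]
      apply Submodule.span_mono
      intro x hx
      exact hXiC x hx
    have hAieq : A i = span ℝ (C : Set V) := hAmax i _ hirr hspanCB hAiC
    -- A j = span C as well (β is adjacent to α)
    have hβC : β ∈ C := Finset.mem_filter.2 ⟨hβΨ,
      Relation.ReflTransGen.single ⟨hαΨ, hβΨ, hne⟩⟩
    have hXjC : ∀ x ∈ Φ.filter (fun v => v ∈ A j), x ∈ C := by
      intro x hx
      have hx' := Finset.mem_filter.1 hx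
      have hβx : Relation.ReflTransGen r β x := hconn j β hβmem x hx
      exact Finset.mem_filter.2 ⟨Finset.mem_filter.2 ⟨hx'.1, hAle j hx'.2⟩,
        (Finset.mem_filter.1 hβC).2.trans hβx⟩
    have hAjC : A j ≤ span ℝ (C : Set V) := by
      rw [(hAirr j).2.1]
      apply Submodule.span_mono
      intro x hx
      exact hXjC x hx
    have hAjeq : A j = span ℝ (C : Set V) := hAmax j _ hirr hspanCB hAjC
    -- contradiction with independence
    have hdisj : Disjoint (A i) (A j) :=
      (hAindep i).mono_right (le_iSup₂ (f := fun m (_ : m ≠ i) => A m) j hij.symm)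
    rw [hAieq, hAjeq, disjoint_self] at hdisj
    have : α ∈ (⊥ : Submodule ℝ V) := by
      rw [← hdisj]; exact hAiC hα.2
    rw [Submodule.mem_bot] at this
    exact h0 (this ▸ hα.1)
  -- extend to the spans
  intro i j hij x hx y hy
  have hx' : x ∈ span ℝ ((Φ.filter (fun v => v ∈ A i) : Finset V) : Set V) := by
    rw [← (hAirr i).2.1]; exact hx
  have hy' : y ∈ span ℝ ((Φ.filter (fun v => v ∈ A j) : Finset V) : Set V) := by
    rw [← (hAirr j).2.1]; exact hy
  exact span_span_orth (key i j hij) hx' hy'
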